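/- Let A, B, C, D ∈ ℝ with A² + B² ≠ 0, and let U ⊆ ℝ² be an open set on which (A·x+C)·(B·y+D) > 0. Define f : U → ℝ by f(x,y) = −2·log((A·x+C)·(B·y+D)). Then f satisfies f_x·f_{xx} + f_y·f_{xy} − f_{xxx} − f_{xyy} = 0 and f_x·f_{yx} + f_y·f_{yy} − f_{yxx} − f_{yyy} = 0 on U. -/

import Mathlib

noncomputable def dx (f : ℝ → ℝ → ℝ) : ℝ → ℝ → ℝ := fun x y => deriv (fun t => f t y) x
noncomputable def dy (f : ℝ → ℝ → ℝ) : ℝ → ℝ → ℝ := fun x y => deriv (fun t => f x t) y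

/-- `E₁ f = f_x f_xx + f_y f_xy - f_xxx - f_xyy` (this is `D₁(λ,f)` for `λ` constant). -/
noncomputable def E1 (f : ℝ → ℝ → ℝ) : ℝ → ℝ → ℝ := fun x y =>
  dx f x y * dx (dx f) x y + dy f x y * dy (dx f) x y
    - dx (dx (dx f)) x y - dy (dy (dx f)) x y

/-- `E₂ f = f_x f_yx + f_y f_yy - f_yxx - f_yyy` (this is `D₂(λ,f)` for `λ` constant). -/
noncomputable def E2 (f : ℝ → ℝ → ℝ) : ℝ → ℝ → ℝ := fun x y =>
  dx f x y * dx (dy f) x y + dy f x y * dy (dy f) x y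
    - dx (dx (dy f)) x y - dy (dy (dy f)) x y

open Real Filter

lemma ev_ne {a c x : ℝ} (h : a * x + c ≠ 0) : ∀ᶠ t in nhds x, a * t + c ≠ 0 :=
  (((continuous_const.mul continuous_id).add continuous_const).continuousAt).eventually_ne h

lemma lin_hasDerivAt (a c x : ℝ) : HasDerivAt (fun t => a * t + c) a x := by
  simpa using ((hasDerivAt_id x).const_mul a).add_const c

section
variable {A B C D : ℝ}

lemma dxF {x y : ℝ} (hx : A * x + C ≠ 0) (hy : B * y + D ≠ 0) :
    dx (fun x y => -2 * Real.log ((A * x + C) * (B * y + D))) x y = -2 * A / (A * x + C) := by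
  have hg : HasDerivAt (fun t => (A * t + C) * (B * y + D)) (A * (B * y + D)) x :=
    (lin_hasDerivAt A C x).mul_const _
  have h := (hg.log (mul_ne_zero hx hy)).const_mul (-2 : ℝ)
  rw [dx]
  rw [h.deriv]
  field_simp

lemma dyF {x y : ℝ} (hx : A * x + C ≠ 0) (hy : B * y + D ≠ 0) :
    dy (fun x y => -2 * Real.log ((A * x + C) * (B * y + D))) x y = -2 * B / (B * y + D) := by
  have hg : HasDerivAt (fun t => (A * x + C) * (B * t + D)) ((A * x + C) * B) y :=
    (lin_hasDerivAt B D y).const_mul _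
  have h := (hg.log (mul_ne_zero hx hy)).const_mul (-2 : ℝ)
  rw [dy]
  rw [h.deriv]
  field_simp

lemma dxdxF {x y : ℝ} (hx : A * x + C ≠ 0) (hy : B * y + D ≠ 0) :
    dx (dx (fun x y => -2 * Real.log ((A * x + C) * (B * y + D)))) x y
      = 2 * A ^ 2 / (A * x + C) ^ 2 := by
  have hev : (fun t => dx (fun x y => -2 * Real.log ((A * x + C) * (B * y + D))) t y)
      =ᶠ[nhds x] fun t => -2 * A / (A * t + C) := by
    filter_upwards [ev_ne hx] with t ht using dxF ht hy
  rw [dx, hev.deriv_eq]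
  have h := ((lin_hasDerivAt A C x).inv hx).const_mul (-2 * A)
  simp only [div_eq_mul_inv]
  rw [show deriv (fun t => -2 * A * (A * t + C)⁻¹) x = _ from h.deriv]
  field_simp

lemma dxdxdxF {x y : ℝ} (hx : A * x + C ≠ 0) (hy : B * y + D ≠ 0) :
    dx (dx (dx (fun x y => -2 * Real.log ((A * x + C) * (B * y + D))))) x y
      = -4 * A ^ 3 / (A * x + C) ^ 3 := by
  have hev : (fun t => dx (dx (fun x y => -2 * Real.log ((A * x + C) * (B * y + D)))) t y)
      =ᶠ[nhds x] fun t => 2 * A ^ 2 / (A * t + C) ^ 2 := by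
    filter_upwards [ev_ne hx] with t ht using dxdxF ht hy
  rw [dx, hev.deriv_eq]
  have h := ((((lin_hasDerivAt A C x).pow 2).inv (pow_ne_zero 2 hx)).const_mul (2 * A ^ 2))
  simp only [div_eq_mul_inv]
  rw [show deriv (fun t => 2 * A ^ 2 * ((A * t + C) ^ 2)⁻¹) x = _ from h.deriv]
  simp only [Pi.pow_apply]
  field_simp
  ring

lemma dydxF {x y : ℝ} (hx : A * x + C ≠ 0) (hy : B * y + D ≠ 0) :
    dy (dx (fun x y => -2 * Real.log ((A * x + C) * (B * y + D)))) x y = 0 := by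
  have hev : (fun t => dx (fun x y => -2 * Real.log ((A * x + C) * (B * y + D))) x t)
      =ᶠ[nhds y] fun _ => -2 * A / (A * x + C) := by
    filter_upwards [ev_ne hy] with t ht using dxF hx ht
  rw [dy, hev.deriv_eq, deriv_const]

lemma dydydxF {x y : ℝ} (hx : A * x + C ≠ 0) (hy : B * y + D ≠ 0) :
    dy (dy (dx (fun x y => -2 * Real.log ((A * x + C) * (B * y + D))))) x y = 0 := by
  have hev : (fun t => dy (dx (fun x y => -2 * Real.log ((A * x + C) * (B * y + D)))) x t)
      =ᶠ[nhds y] fun _ => (0 : ℝ) := by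
    filter_upwards [ev_ne hy] with t ht using dydxF hx ht
  rw [dy, hev.deriv_eq, deriv_const]

lemma dydyF {x y : ℝ} (hx : A * x + C ≠ 0) (hy : B * y + D ≠ 0) :
    dy (dy (fun x y => -2 * Real.log ((A * x + C) * (B * y + D)))) x y
      = 2 * B ^ 2 / (B * y + D) ^ 2 := by
  have hev : (fun t => dy (fun x y => -2 * Real.log ((A * x + C) * (B * y + D))) x t)
      =ᶠ[nhds y] fun t => -2 * B / (B * t + D) := by
    filter_upwards [ev_ne hy] with t ht using dyF hx ht
  rw [dy, hev.deriv_eq]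
  have h := ((lin_hasDerivAt B D y).inv hy).const_mul (-2 * B)
  simp only [div_eq_mul_inv]
  rw [show deriv (fun t => -2 * B * (B * t + D)⁻¹) y = _ from h.deriv]
  field_simp

lemma dydydyF {x y : ℝ} (hx : A * x + C ≠ 0) (hy : B * y + D ≠ 0) :
    dy (dy (dy (fun x y => -2 * Real.log ((A * x + C) * (B * y + D))))) x y
      = -4 * B ^ 3 / (B * y + D) ^ 3 := by
  have hev : (fun t => dy (dy (fun x y => -2 * Real.log ((A * x + C) * (B * y + D)))) x t)
      =ᶠ[nhds y] fun t => 2 * B ^ 2 / (B * t + D) ^ 2 := by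
    filter_upwards [ev_ne hy] with t ht using dydyF hx ht
  rw [dy, hev.deriv_eq]
  have h := ((((lin_hasDerivAt B D y).pow 2).inv (pow_ne_zero 2 hy)).const_mul (2 * B ^ 2))
  simp only [div_eq_mul_inv]
  rw [show deriv (fun t => 2 * B ^ 2 * ((B * t + D) ^ 2)⁻¹) y = _ from h.deriv]
  simp only [Pi.pow_apply]
  field_simp
  ring

lemma dxdyF {x y : ℝ} (hx : A * x + C ≠ 0) (hy : B * y + D ≠ 0) :
    dx (dy (fun x y => -2 * Real.log ((A * x + C) * (B * y + D)))) x y = 0 := by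
  have hev : (fun t => dy (fun x y => -2 * Real.log ((A * x + C) * (B * y + D))) t y)
      =ᶠ[nhds x] fun _ => -2 * B / (B * y + D) := by
    filter_upwards [ev_ne hx] with t ht using dyF ht hy
  rw [dx, hev.deriv_eq, deriv_const]

lemma dxdxdyF {x y : ℝ} (hx : A * x + C ≠ 0) (hy : B * y + D ≠ 0) :
    dx (dx (dy (fun x y => -2 * Real.log ((A * x + C) * (B * y + D))))) x y = 0 := by
  have hev : (fun t => dx (dy (fun x y => -2 * Real.log ((A * x + C) * (B * y + D)))) t y)
      =ᶠ[nhds x] fun _ => (0 : ℝ) := by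
    filter_upwards [ev_ne hx] with t ht using dxdyF ht hy
  rw [dx, hev.deriv_eq, deriv_const]

end

theorem stmt6 (A B C D : ℝ) (hAB : A^2 + B^2 ≠ 0) (U : Set (ℝ × ℝ)) (hU : IsOpen U)
    (hpos : ∀ p ∈ U, (A * p.1 + C) * (B * p.2 + D) > 0) :
    ∀ p ∈ U,
      E1 (fun x y => -2 * Real.log ((A * x + C) * (B * y + D))) p.1 p.2 = 0 ∧
      E2 (fun x y => -2 * Real.log ((A * x + C) * (B * y + D))) p.1 p.2 = 0 := by
  intro p hp
  have hprod := hpos p hp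
  have hx : A * p.1 + C ≠ 0 := fun h => by rw [h, zero_mul] at hprod; exact lt_irrefl 0 hprod
  have hy : B * p.2 + D ≠ 0 := fun h => by rw [h, mul_zero] at hprod; exact lt_irrefl 0 hprod
  constructor
  · rw [E1, dxF hx hy, dyF hx hy, dxdxF hx hy, dydxF hx hy, dxdxdxF hx hy, dydydxF hx hy]
    field_simp
    ring
  · rw [E2, dxF hx hy, dyF hx hy, dxdyF hx hy, dydyF hx hy, dxdxdyF hx hy, dydydyF hx hy]
    field_simp
    ring
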